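/- arXiv:2602.09283 — 10 statements merged into one kernel-verified Lean document; each statement's English description precedes it below -/
import Mathlib

section
/- Let X be a compact Hausdorff space, Y a Hausdorff space, and f : X → Y a continuous map. Then f is quasi-open (the image under f of every nonempty open subset of X has nonempty interior in Y) if and only if f is skeletal (the preimage under f of every dense open subset of Y is dense in X). -/
/-- A continuous map between a compact Hausdorff space and a Hausdorff space is
quasi-open (images of nonempty opens have nonempty interior) iff it is skeletal
(preimages of dense open sets are dense). -/
theorem quasiOpen_iff_skeletal {X Y : Type*} [TopologicalSpace X] [TopologicalSpace Y]
    [CompactSpace X] [T2Space X] [T2Space Y] (f : X → Y) (hf : Continuous f) :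
    (∀ U : Set X, IsOpen U → U.Nonempty → (interior (f '' U)).Nonempty) ↔
    (∀ D : Set Y, IsOpen D → Dense D → Dense (f ⁻¹' D)) := by
  constructor
  · intro h D hD hDdense
    rw [dense_iff_inter_open]
    intro U hU hUne
    obtain ⟨y, hy⟩ := h U hU hUne
    obtain ⟨z, hzV, hzD⟩ := hDdense.inter_open_nonempty _ isOpen_interior ⟨y, hy⟩
    have hz' : z ∈ f '' U := interior_subset hzV
    obtain ⟨x, hxU, rfl⟩ := hz'
    exact ⟨x, hxU, hzD⟩
  · intro h U hU ⟨x, hxU⟩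
    by_contra hempty
    rw [Set.not_nonempty_iff_eq_empty] at hempty
    obtain ⟨K, hKcomp, hxK, hKU⟩ := exists_compact_subset hU hxU
    have hfK : IsClosed (f '' K) := (hKcomp.image hf).isClosed
    have hint : interior (f '' K) = ∅ := by
      have : interior (f '' K) ⊆ interior (f '' U) :=
        interior_mono (Set.image_mono hKU)
      rw [hempty] at this
      exact Set.subset_empty_iff.mp this
    have hDdense : Dense ((f '' K)ᶜ) := interior_eq_empty_iff_dense_compl.mp hint
    have := (h _ hfK.isOpen_compl hDdense).inter_open_nonempty _ isOpen_interior ⟨x, hxK⟩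
    obtain ⟨z, hz2, hz1⟩ := this
    exact hz1 (Set.mem_image_of_mem f (interior_subset hz2))
end

section
/- Let S be an extremally disconnected compact Hausdorff space, W ⊆ S a dense subset, X a compact Hausdorff space, and h : W → X a continuous map (where W carries the subspace topology). Then there exists a unique continuous map H : S → X such that H w = h w for every w ∈ W. -/
open Filter Set Topology

/-- A continuous map from a dense subset of an extremally disconnected compact
Hausdorff space into a compact Hausdorff space has a unique continuous extension. -/
theorem unique_continuous_extension_of_dense_extremallyDisconnected
    {S X : Type*} [TopologicalSpace S] [CompactSpace S] [T2Space S]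
    [ExtremallyDisconnected S] [TopologicalSpace X] [CompactSpace X] [T2Space X]
    (W : Set S) (hW : Dense W) (h : W → X) (hh : Continuous h) :
    ∃ H : S → X, (Continuous H ∧ ∀ w : W, H w = h w) ∧
      ∀ H' : S → X, Continuous H' → (∀ w : W, H' w = h w) → H' = H := by
  have di : IsDenseInducing ((↑) : W → S) := hW.isDenseEmbedding_val.toIsDenseInducing
  -- any cluster point witnesses closure membership
  have hclos : ∀ (s : S) (x : X), MapClusterPt x (comap (Subtype.val : W → S) (𝓝 s)) h →
      ∀ V : Set X, V ∈ 𝓝 x → s ∈ closure ((Subtype.val : W → S) '' (h ⁻¹' V)) := by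
    intro s x hx V hV
    have h1 : NeBot (map h (comap (Subtype.val : W → S) (𝓝 s)) ⊓ 𝓟 V) :=
      hx.neBot.mono (le_inf inf_le_right (inf_le_left.trans (le_principal_iff.mpr hV)))
    have h2 : NeBot (comap (Subtype.val : W → S) (𝓝 s) ⊓ 𝓟 (h ⁻¹' V)) := by
      rw [← Filter.map_neBot_iff h, ← Filter.comap_principal, Filter.push_pull]
      exact h1
    rw [mem_closure_iff_clusterPt]
    have h3 : NeBot (map Subtype.val (comap (Subtype.val : W → S) (𝓝 s) ⊓ 𝓟 (h ⁻¹' V))) :=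
      h2.map _
    refine h3.mono ?_
    calc map Subtype.val (comap (Subtype.val : W → S) (𝓝 s) ⊓ 𝓟 (h ⁻¹' V))
        ≤ map Subtype.val (comap (Subtype.val : W → S) (𝓝 s)) ⊓
          map Subtype.val (𝓟 (h ⁻¹' V)) := Filter.map_inf_le
      _ ≤ 𝓝 s ⊓ 𝓟 (Subtype.val '' (h ⁻¹' V)) := by
          gcongr
          · exact map_comap_le
          · rw [map_principal]
  -- key: limits exist along the trace filter
  have key : ∀ s : S, ∃ c : X, Tendsto h (comap (Subtype.val : W → S) (𝓝 s)) (𝓝 c) := by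
    intro s
    haveI : NeBot (comap (Subtype.val : W → S) (𝓝 s)) := di.comap_nhds_neBot s
    obtain ⟨x, hx⟩ := exists_clusterPt_of_compactSpace
      (map h (comap (Subtype.val : W → S) (𝓝 s)))
    have huniq : ∀ y : X, MapClusterPt y (comap (Subtype.val : W → S) (𝓝 s)) h → y = x := by
      intro y hy
      by_contra hne
      obtain ⟨V₁, V₂, hV₁, hV₂, hyV₁, hxV₂, hdisj⟩ := t2_separation hne
      obtain ⟨O₁, hO₁, hpre₁⟩ := isOpen_induced_iff.mp (hV₁.preimage hh)
      obtain ⟨O₂, hO₂, hpre₂⟩ := isOpen_induced_iff.mp (hV₂.preimage hh)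
      have hs₁ : s ∈ closure O₁ := by
        have := hclos s y hy V₁ (hV₁.mem_nhds hyV₁)
        rw [← hpre₁] at this
        exact closure_mono (image_preimage_subset _ _) this
      have hs₂ : s ∈ closure O₂ := by
        have := hclos s x hx V₂ (hV₂.mem_nhds hxV₂)
        rw [← hpre₂] at this
        exact closure_mono (image_preimage_subset _ _) this
      have hOdisj : Disjoint O₁ O₂ := by
        rw [Set.disjoint_iff_inter_eq_empty]
        by_contra hne'
        obtain ⟨w, hwO, hwW⟩ := hW.inter_open_nonempty _ (hO₁.inter hO₂)
          (nonempty_iff_ne_empty.mpr hne')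
        have hw1 : (⟨w, hwW⟩ : W) ∈ h ⁻¹' V₁ := by rw [← hpre₁]; exact hwO.1
        have hw2 : (⟨w, hwW⟩ : W) ∈ h ⁻¹' V₂ := by rw [← hpre₂]; exact hwO.2
        exact hdisj.le_bot ⟨hw1, hw2⟩
      exact (ExtremallyDisconnected.disjoint_closure_of_disjoint_isOpen hOdisj hO₁ hO₂).le_bot
        ⟨hs₁, hs₂⟩
    exact ⟨x, isCompact_univ.le_nhds_of_unique_clusterPt univ_mem
      (fun z _ hz => huniq z hz)⟩
  haveI : T3Space X := inferInstance
  refine ⟨di.extend h, ⟨di.continuous_extend key, fun w => di.extend_eq hh w⟩, ?_⟩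
  intro H' hH' hHw
  refine Continuous.ext_on hW hH' (di.continuous_extend key) fun s hs => ?_
  have := hHw ⟨s, hs⟩
  rw [this, ← di.extend_eq hh ⟨s, hs⟩]
end

section
/- Let S be an extremally disconnected compact Hausdorff space, W ⊆ S a dense subset, X a compact Hausdorff space, and h : W → X a continuous map (subspace topology on W) such that for every dense open set D ⊆ X, the preimage h⁻¹ D is dense in W. If H : S → X is a continuous map with H w = h w for every w ∈ W, then for every dense open set D ⊆ X, the preimage H⁻¹ D is dense in S (i.e. H is skeletal), and consequently for every nonempty open U ⊆ S the image H '' U has nonempty interior in X (i.e. H is quasi-open). -/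
/-- If a skeletal continuous map on a dense subset of an extremally disconnected
compact Hausdorff space extends continuously, then the extension is skeletal,
and consequently quasi-open. -/
theorem extension_skeletal_and_quasiOpen
    {S X : Type*} [TopologicalSpace S] [CompactSpace S] [T2Space S]
    [ExtremallyDisconnected S] [TopologicalSpace X] [CompactSpace X] [T2Space X]
    (W : Set S) (hW : Dense W) (h : W → X) (hh : Continuous h)
    (hsk : ∀ D : Set X, IsOpen D → Dense D → Dense (h ⁻¹' D))
    (H : S → X) (hH : Continuous H) (hHW : ∀ w : W, H w = h w) :
    (∀ D : Set X, IsOpen D → Dense D → Dense (H ⁻¹' D)) ∧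
    (∀ U : Set S, IsOpen U → U.Nonempty → (interior (H '' U)).Nonempty) := by
  have skel : ∀ D : Set X, IsOpen D → Dense D → Dense (H ⁻¹' D) := by
    intro D hDo hDd
    have hA : Dense (h ⁻¹' D) := hsk D hDo hDd
    have hval : DenseRange ((↑) : W → S) := hW.denseRange_val
    have himg : Dense ((↑) '' (h ⁻¹' D) : Set S) :=
      hval.dense_image continuous_subtype_val hA
    refine himg.mono ?_
    rintro s ⟨w, hwD, rfl⟩
    simpa [Set.mem_preimage, hHW w] using hwD
  refine ⟨skel, ?_⟩
  intro U hUo hUne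
  obtain ⟨x, hxU⟩ := hUne
  obtain ⟨t, htx, htc, htU⟩ := exists_mem_nhds_isClosed_subset (hUo.mem_nhds hxU)
  set V : Set S := interior t with hV
  have hxV : x ∈ V := mem_interior_iff_mem_nhds.mpr htx
  have hclV : closure V ⊆ U := (closure_minimal interior_subset htc).trans htU
  have hK : IsCompact (H '' closure V) := (isClosed_closure.isCompact).image hH
  have hKc : IsClosed (H '' closure V) := hK.isClosed
  by_contra hne
  rw [Set.not_nonempty_iff_eq_empty] at hne
  have hint : interior (H '' closure V) = ∅ := by
    rw [← Set.subset_empty_iff, ← hne]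
    exact interior_mono (Set.image_mono (f := H) hclV)
  have hDd : Dense (H '' closure V)ᶜ := by
    rw [dense_iff_closure_eq, closure_compl, hint, Set.compl_empty]
  have hdense := skel _ hKc.isOpen_compl hDd
  obtain ⟨y, hyV, hyD⟩ := hdense.inter_open_nonempty V isOpen_interior ⟨x, hxV⟩
  exact hyD (Set.mem_image_of_mem H (subset_closure hyV))
end

section
/- Let X and Y be extremally disconnected compact Hausdorff spaces and let f : X → Y be a continuous quasi-open map. Then f is an open map. -/
/-- A continuous quasi-open map between extremally disconnected compact Hausdorff
spaces is open. -/
theorem isOpenMap_of_quasiOpen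
    {X Y : Type*} [TopologicalSpace X] [CompactSpace X] [T2Space X]
    [ExtremallyDisconnected X] [TopologicalSpace Y] [CompactSpace Y] [T2Space Y]
    [ExtremallyDisconnected Y] (f : X → Y) (hf : Continuous f)
    (hqo : ∀ U : Set X, IsOpen U → U.Nonempty → (interior (f '' U)).Nonempty) :
    IsOpenMap f := by
  have key : ∀ K : Set X, IsClopen K → IsOpen (f '' K) := by
    intro K hK
    set V := interior (f '' K) with hV
    have hcl : IsClosed (f '' K) := (hK.isClosed.isCompact.image hf).isClosed
    have hsub : f '' K ⊆ closure V := by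
      rintro y ⟨x, hxK, rfl⟩
      by_contra hyc
      set W := K ∩ f ⁻¹' (closure V)ᶜ with hW
      have hWopen : IsOpen W := hK.2.inter (isClosed_closure.isOpen_compl.preimage hf)
      have hWne : W.Nonempty := ⟨x, hxK, hyc⟩
      obtain ⟨z, hz⟩ := hqo W hWopen hWne
      have h1 : interior (f '' W) ⊆ V :=
        interior_mono (Set.image_mono (f := f) Set.inter_subset_left)
      have h2 : f '' W ⊆ (closure V)ᶜ := by
        rintro _ ⟨w, hw, rfl⟩; exact hw.2
      exact h2 (interior_subset hz) (subset_closure (h1 hz))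
    have heq : f '' K = closure V :=
      subset_antisymm hsub (closure_minimal interior_subset hcl)
    rw [heq]
    exact ExtremallyDisconnected.open_closure V isOpen_interior
  intro U hU
  rw [isOpen_iff_mem_nhds]
  rintro _ ⟨x, hxU, rfl⟩
  obtain ⟨K, hK, hxK, hKU⟩ :=
    isTopologicalBasis_isClopen.exists_subset_of_mem_open hxU hU
  exact Filter.mem_of_superset ((key K hK).mem_nhds ⟨x, hxK, rfl⟩)
    (Set.image_mono (f := f) hKU)
end

section
/- Let X and Y be compact Hausdorff spaces and f : X → Y a continuous quasi-open map. Let E_X and E_Y be extremally disconnected compact Hausdorff spaces and let p : E_X → X and q : E_Y → Y be continuous surjections that are irreducible and quasi-open. Then there exists a unique continuous map g : E_X → E_Y with q ∘ g = f ∘ p, and this map g is open. -/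
open Set Function

universe u v w

/-- Extremal disconnectedness transfers along homeomorphisms. -/
lemma myED_of_homeo {A : Type u} {B : Type v} [TopologicalSpace A] [TopologicalSpace B]
    [ExtremallyDisconnected A] (h : A ≃ₜ B) : ExtremallyDisconnected B := by
  constructor
  intro s hs
  have : closure s = h '' closure (h ⁻¹' s) := by
    rw [h.image_closure, h.image_preimage]
  rw [this]
  exact h.isOpenMap _ (ExtremallyDisconnected.open_closure _ (hs.preimage h.continuous))

/-- Gleason projectivity, in three independent universes. -/
lemma my_exists_lift {E : Type u} {E' : Type v} {Z : Type w}
    [TopologicalSpace E] [CompactSpace E] [T2Space E] [ExtremallyDisconnected E]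
    [TopologicalSpace E'] [CompactSpace E'] [T2Space E']
    [TopologicalSpace Z] [CompactSpace Z] [T2Space Z]
    {r : E → Z} (hr : Continuous r) {q : E' → Z} (hq : Continuous q)
    (hqs : Surjective q) :
    ∃ g : E → E', Continuous g ∧ q ∘ g = r := by
  let A := ULift.{max v w} E
  haveI : T2Space A := (Homeomorph.ulift (X := E)).isEmbedding.t2Space
  haveI : T2Space (ULift.{max u w} E') := (Homeomorph.ulift (X := E')).isEmbedding.t2Space
  haveI : T2Space (ULift.{max u v} Z) := (Homeomorph.ulift (X := Z)).isEmbedding.t2Space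
  haveI : ExtremallyDisconnected A := myED_of_homeo (Homeomorph.ulift (X := E)).symm
  have hf : Continuous ((Homeomorph.ulift (X := Z)).symm ∘ r ∘ (Homeomorph.ulift (X := E))) :=
    (Homeomorph.ulift.symm.continuous).comp (hr.comp Homeomorph.ulift.continuous)
  have hg : Continuous ((Homeomorph.ulift (X := Z)).symm ∘ q ∘ (Homeomorph.ulift (X := E'))) :=
    (Homeomorph.ulift.symm.continuous).comp (hq.comp Homeomorph.ulift.continuous)
  have hgs : Surjective ((Homeomorph.ulift (X := Z)).symm ∘ q ∘ (Homeomorph.ulift (X := E'))) :=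
    (Homeomorph.ulift.symm.surjective).comp (hqs.comp Homeomorph.ulift.surjective)
  obtain ⟨h, hcont, hcomm⟩ :=
    CompactT2.ExtremallyDisconnected.projective (A := A) hf hg hgs
  refine ⟨Homeomorph.ulift ∘ h ∘ (Homeomorph.ulift (X := E)).symm,
    Homeomorph.ulift.continuous.comp (hcont.comp Homeomorph.ulift.symm.continuous), ?_⟩
  funext x
  have := congrFun hcomm ((Homeomorph.ulift (X := E)).symm x)
  simp only [comp_apply] at this ⊢
  have := congrArg (Homeomorph.ulift (X := Z)) this
  simpa using this

/-- For an irreducible surjection, if an open set is contained in the image of a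
closed set, then its preimage lies in that closed set. -/
lemma my_irr_preimage {E Y : Type*} [TopologicalSpace E] [TopologicalSpace Y]
    {q : E → Y} (hq : Continuous q) (hqs : Surjective q)
    (hqirr : ∀ C : Set E, IsClosed C → q '' C = Set.univ → C = Set.univ)
    {C : Set E} {V : Set Y} (hC : IsClosed C) (hVo : IsOpen V) (hV : V ⊆ q '' C) :
    q ⁻¹' V ⊆ C := by
  have hD : IsClosed (C ∪ (q ⁻¹' V)ᶜ) := hC.union (hVo.preimage hq).isClosed_compl
  have himg : q '' (C ∪ (q ⁻¹' V)ᶜ) = Set.univ := by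
    ext y
    simp only [Set.mem_univ, iff_true]
    by_cases hy : y ∈ V
    · obtain ⟨c, hc, rfl⟩ := hV hy
      exact ⟨c, Or.inl hc, rfl⟩
    · obtain ⟨e, rfl⟩ := hqs y
      exact ⟨e, Or.inr fun h => hy h, rfl⟩
  have huniv := hqirr _ hD himg
  intro x hx
  have hx2 : x ∈ C ∪ (q ⁻¹' V)ᶜ := huniv ▸ Set.mem_univ x
  rcases hx2 with h | h
  · exact h
  · exact absurd hx h

/-- Clopen neighbourhood basis in an extremally disconnected compact Hausdorff space. -/
lemma my_clopen_basis {E : Type*} [TopologicalSpace E] [CompactSpace E] [T2Space E]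
    [ExtremallyDisconnected E] {U : Set E} (hU : IsOpen U) {e : E} (he : e ∈ U) :
    ∃ K : Set E, IsClopen K ∧ e ∈ K ∧ K ⊆ U := by
  obtain ⟨t, ht, htc, hts⟩ := exists_mem_nhds_isClosed_subset (hU.mem_nhds he)
  refine ⟨closure (interior t),
    ⟨isClosed_closure, ExtremallyDisconnected.open_closure _ isOpen_interior⟩,
    subset_closure (mem_interior_iff_mem_nhds.mpr ht), ?_⟩
  calc closure (interior t) ⊆ closure t := closure_mono interior_subset
    _ = t := htc.closure_eq
    _ ⊆ U := hts

/-- A continuous quasi-open map between compact Hausdorff spaces has a unique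
absolute (lift to the irreducible quasi-open covers by extremally disconnected
spaces), and this lift is open. -/
theorem unique_open_absolute_of_quasiOpen
    {X Y EX EY : Type*}
    [TopologicalSpace X] [CompactSpace X] [T2Space X]
    [TopologicalSpace Y] [CompactSpace Y] [T2Space Y]
    [TopologicalSpace EX] [CompactSpace EX] [T2Space EX] [ExtremallyDisconnected EX]
    [TopologicalSpace EY] [CompactSpace EY] [T2Space EY] [ExtremallyDisconnected EY]
    (f : X → Y) (hf : Continuous f)
    (hfqo : ∀ U : Set X, IsOpen U → U.Nonempty → (interior (f '' U)).Nonempty)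
    (p : EX → X) (hp : Continuous p) (hps : Function.Surjective p)
    (hpirr : ∀ C : Set EX, IsClosed C → p '' C = Set.univ → C = Set.univ)
    (hpqo : ∀ U : Set EX, IsOpen U → U.Nonempty → (interior (p '' U)).Nonempty)
    (q : EY → Y) (hq : Continuous q) (hqs : Function.Surjective q)
    (hqirr : ∀ C : Set EY, IsClosed C → q '' C = Set.univ → C = Set.univ)
    (hqqo : ∀ U : Set EY, IsOpen U → U.Nonempty → (interior (q '' U)).Nonempty) :
    ∃ g : EX → EY, (Continuous g ∧ q ∘ g = f ∘ p ∧ IsOpenMap g) ∧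
      ∀ g' : EX → EY, Continuous g' → q ∘ g' = f ∘ p → g' = g := by
  -- existence of a continuous lift
  obtain ⟨g, hgc, hgcomm⟩ := my_exists_lift (hf.comp hp) hq hqs
  -- the key quasi-openness consequence: for a nonempty open set A of EX,
  -- there is a nonempty open V ⊆ Y with V ⊆ f '' (p '' A)
  have key : ∀ A : Set EX, IsOpen A → A.Nonempty →
      ∃ V : Set Y, IsOpen V ∧ V.Nonempty ∧ V ⊆ f '' (p '' A) := by
    intro A hA hAne
    obtain ⟨x, hx⟩ := hpqo A hA hAne
    have hO : IsOpen (interior (p '' A)) := isOpen_interior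
    obtain ⟨y, hy⟩ := hfqo _ hO ⟨x, hx⟩
    refine ⟨interior (f '' interior (p '' A)), isOpen_interior, ⟨y, hy⟩, ?_⟩
    calc interior (f '' interior (p '' A)) ⊆ f '' interior (p '' A) := interior_subset
      _ ⊆ f '' (p '' A) := image_mono interior_subset
  -- images under g: q '' (g '' A) = f '' (p '' A)
  have himg : ∀ A : Set EX, q '' (g '' A) = f '' (p '' A) := by
    intro A
    rw [← image_comp, ← image_comp, hgcomm]
  -- openness: image of a clopen set is open
  have hclopen_open : ∀ K : Set EX, IsClopen K → IsOpen (g '' K) := by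
    intro K hK
    have hKcl : IsClosed (g '' K) :=
      (hK.1.isCompact.image hgc).isClosed
    have hdense : g '' K ⊆ closure (interior (g '' K)) := by
      intro y hy
      rw [mem_closure_iff]
      intro W hW hyW
      obtain ⟨e, heK, rfl⟩ := hy
      -- A := K ∩ g ⁻¹' W is open nonempty
      have hAo : IsOpen (K ∩ g ⁻¹' W) := hK.2.inter (hW.preimage hgc)
      have hAne : (K ∩ g ⁻¹' W).Nonempty := ⟨e, heK, hyW⟩
      obtain ⟨V, hVo, hVne, hVsub⟩ := key _ hAo hAne
      have hVsub' : V ⊆ q '' (g '' (K ∩ g ⁻¹' W)) := by rw [himg]; exact hVsub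
      -- two applications of irreducibility
      have h1 : q ⁻¹' V ⊆ g '' K :=
        my_irr_preimage hq hqs hqirr hKcl hVo
          (hVsub'.trans (image_mono (image_mono inter_subset_left)))
      have h2 : q ⁻¹' V ⊆ closure (W ∩ g '' K) := by
        refine my_irr_preimage hq hqs hqirr isClosed_closure hVo (hVsub'.trans ?_)
        refine (image_mono ?_).trans (image_mono subset_closure)
        rintro z ⟨e', he', rfl⟩
        exact ⟨he'.2, ⟨e', he'.1, rfl⟩⟩
      obtain ⟨y0, hy0⟩ := hVne
      obtain ⟨z, rfl⟩ := hqs y0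
      have hz : z ∈ q ⁻¹' V := hy0
      -- the open set q ⁻¹' V is a neighbourhood of z, which is in the closure
      have hmeet : ((q ⁻¹' V) ∩ (W ∩ g '' K)).Nonempty := by
        have := (mem_closure_iff.mp (h2 hz)) _ (hVo.preimage hq) hz
        exact this
      obtain ⟨w, hw1, hw2, _⟩ := hmeet
      refine ⟨w, hw2, ?_⟩
      -- w ∈ interior (g '' K) since q⁻¹V ∩ W is open and contained in g '' K
      have : (q ⁻¹' V) ∩ W ⊆ g '' K := fun a ha => h1 ha.1
      exact interior_maximal this ((hVo.preimage hq).inter hW) ⟨hw1, hw2⟩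
    have : g '' K = closure (interior (g '' K)) :=
      Subset.antisymm hdense (closure_minimal interior_subset hKcl)
    rw [this]
    exact ExtremallyDisconnected.open_closure _ isOpen_interior
  have hopen : IsOpenMap g := by
    intro U hU
    rw [isOpen_iff_forall_mem_open]
    rintro y ⟨e, heU, rfl⟩
    obtain ⟨K, hK, heK, hKU⟩ := my_clopen_basis hU heU
    exact ⟨g '' K, image_mono hKU, hclopen_open K hK, ⟨e, heK, rfl⟩⟩
  refine ⟨g, ⟨hgc, hgcomm, hopen⟩, ?_⟩
  -- uniqueness
  intro g' hg'c hg'comm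
  funext e
  by_contra hne
  obtain ⟨U, V, hUo, hVo, hgU, hgV, hUV⟩ := t2_separation hne
  -- K := closure U is clopen, contains g' e, and misses V
  set K := closure U with hKdef
  have hKo : IsOpen K := ExtremallyDisconnected.open_closure _ hUo
  have hKc : IsClosed K := isClosed_closure
  have hVK : V ⊆ Kᶜ := by
    intro z hz hzK
    obtain ⟨w, hw1, hw2⟩ := mem_closure_iff.mp hzK V hVo hz
    exact hUV.le_bot ⟨hw2, hw1⟩
  -- A := g' ⁻¹' K ∩ g ⁻¹' V is open nonempty
  have hAo : IsOpen (g' ⁻¹' K ∩ g ⁻¹' V) := (hKo.preimage hg'c).inter (hVo.preimage hgc)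
  have hAne : (g' ⁻¹' K ∩ g ⁻¹' V).Nonempty := ⟨e, subset_closure hgU, hgV⟩
  obtain ⟨W, hWo, hWne, hWsub⟩ := key _ hAo hAne
  have himg' : q '' (g' '' (g' ⁻¹' K ∩ g ⁻¹' V)) = f '' (p '' (g' ⁻¹' K ∩ g ⁻¹' V)) := by
    rw [← image_comp, ← image_comp, hg'comm]
  have h1 : q ⁻¹' W ⊆ K := by
    refine my_irr_preimage hq hqs hqirr hKc hWo ?_
    calc W ⊆ f '' (p '' (g' ⁻¹' K ∩ g ⁻¹' V)) := hWsub
      _ = q '' (g' '' (g' ⁻¹' K ∩ g ⁻¹' V)) := himg'.symm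
      _ ⊆ q '' K := by
          refine image_mono ?_
          rintro z ⟨a, ha, rfl⟩
          exact ha.1
  have h2 : q ⁻¹' W ⊆ Kᶜ := by
    refine my_irr_preimage hq hqs hqirr hKo.isClosed_compl hWo ?_
    calc W ⊆ f '' (p '' (g' ⁻¹' K ∩ g ⁻¹' V)) := hWsub
      _ = q '' (g '' (g' ⁻¹' K ∩ g ⁻¹' V)) := (himg _).symm
      _ ⊆ q '' Kᶜ := by
          refine image_mono ?_
          rintro z ⟨a, ha, rfl⟩
          exact hVK ha.2
  obtain ⟨y0, hy0⟩ := hWne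
  obtain ⟨z, rfl⟩ := hqs y0
  exact (h2 hy0) (h1 hy0)
end

section
/- Let X and Y be compact Hausdorff spaces, f : X → Y a continuous quasi-open map, and U ⊆ Y a regular open set (i.e. interior (closure U) = U). Then interior (closure (f⁻¹ (interior (Uᶜ)))) = interior ((interior (closure (f⁻¹ U)))ᶜ), where complements are taken in Y and X respectively. -/
/-- For a continuous quasi-open map between compact Hausdorff spaces and a
regular open set `U ⊆ Y`, the regular-open preimage operation preserves negation. -/
theorem quasiOpen_preimage_regularOpen_neg
    {X Y : Type*} [TopologicalSpace X] [CompactSpace X] [T2Space X]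
    [TopologicalSpace Y] [CompactSpace Y] [T2Space Y]
    (f : X → Y) (hf : Continuous f)
    (hqo : ∀ U : Set X, IsOpen U → U.Nonempty → (interior (f '' U)).Nonempty)
    (U : Set Y) (hU : interior (closure U) = U) :
    interior (closure (f ⁻¹' (interior (Uᶜ)))) =
      interior ((interior (closure (f ⁻¹' U)))ᶜ) := by
  have hUopen : IsOpen U := hU ▸ isOpen_interior
  apply subset_antisymm
  · apply interior_mono
    apply closure_minimal _ isOpen_interior.isClosed_compl
    intro x hx hx2
    have hx2' : x ∈ closure (f ⁻¹' U) := interior_subset hx2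
    obtain ⟨z, hz1, hz2⟩ := mem_closure_iff.mp hx2' _
      (isOpen_interior.preimage hf) hx
    exact (interior_subset (hz1 : f z ∈ interior Uᶜ)) hz2
  · apply interior_maximal _ isOpen_interior
    intro x hx
    by_contra hxc
    have hGopen : IsOpen (interior ((interior (closure (f ⁻¹' U)))ᶜ) ∩
        (closure (f ⁻¹' (interior Uᶜ)))ᶜ) :=
      isOpen_interior.inter isClosed_closure.isOpen_compl
    obtain ⟨y, hy⟩ := hqo _ hGopen ⟨x, hx, hxc⟩
    by_cases hyV : y ∈ interior Uᶜ
    · obtain ⟨g, hgG, hgy⟩ := interior_subset hy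
      exact hgG.2 (subset_closure (show g ∈ f ⁻¹' (interior Uᶜ) by
        rw [Set.mem_preimage, hgy]; exact hyV))
    · have hyc : y ∈ closure U := by
        by_contra h
        exact hyV (by rw [interior_compl]; exact h)
      obtain ⟨z, hzO, hzU⟩ := mem_closure_iff.mp hyc _ isOpen_interior hy
      obtain ⟨g, hgG, hgz⟩ := interior_subset hzO
      have hgU : g ∈ f ⁻¹' U := by rw [Set.mem_preimage, hgz]; exact hzU
      have : g ∈ interior (closure (f ⁻¹' U)) :=
        interior_maximal (fun a ha => subset_closure ha.2)
          (hGopen.inter (hUopen.preimage hf)) ⟨hgG, hgU⟩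
      exact interior_subset hgG.1 this
end

section
/- Let X and Y be compact Hausdorff spaces, f : X → Y a continuous quasi-open map, A an index type, and (U α)_{α ∈ A} a family of open subsets of Y. Then closure (f⁻¹ (⋃ α, U α)) = closure (f⁻¹ (interior (closure (⋃ α, U α)))). -/
/-- For a continuous quasi-open map between compact Hausdorff spaces and a family
of open sets in the codomain, the closure of the preimage of the union equals the
closure of the preimage of the regularization of the union. -/
theorem quasiOpen_closure_preimage_iUnion
    {X Y : Type*} [TopologicalSpace X] [CompactSpace X] [T2Space X]
    [TopologicalSpace Y] [CompactSpace Y] [T2Space Y]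
    (f : X → Y) (hf : Continuous f)
    (hqo : ∀ U : Set X, IsOpen U → U.Nonempty → (interior (f '' U)).Nonempty)
    {A : Type*} (U : A → Set Y) (hU : ∀ α, IsOpen (U α)) :
    closure (f ⁻¹' ⋃ α, U α) =
      closure (f ⁻¹' interior (closure (⋃ α, U α))) := by
  set S := ⋃ α, U α with hS
  have hSopen : IsOpen S := isOpen_iUnion hU
  apply subset_antisymm
  · exact closure_mono (Set.preimage_mono
      (interior_maximal subset_closure hSopen))
  · refine closure_minimal ?_ isClosed_closure
    intro x hx
    by_contra hxc
    rw [mem_closure_iff] at hxc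
    push_neg at hxc
    obtain ⟨o, ho, hxo, hdisj⟩ := hxc
    set W : Set X := o ∩ f ⁻¹' interior (closure S) with hW
    have hWopen : IsOpen W := ho.inter (isOpen_interior.preimage hf)
    have hWne : W.Nonempty := ⟨x, hxo, hx⟩
    obtain ⟨y, hy⟩ := hqo W hWopen hWne
    have hyimg : y ∈ f '' W := interior_subset hy
    have hycl : y ∈ closure S := by
      obtain ⟨w, hw, rfl⟩ := hyimg
      exact interior_subset hw.2
    have hmeet : ((interior (f '' W)) ∩ S).Nonempty :=
      (mem_closure_iff.mp hycl) _ isOpen_interior hy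
    obtain ⟨z, hz1, hz2⟩ := hmeet
    obtain ⟨w, hw, rfl⟩ := interior_subset hz1
    exact absurd (hdisj ▸ ⟨hw.1, hz2⟩ : w ∈ (∅ : Set X)) (Set.notMem_empty w)
end

section
/- Let U and V₁, …, Vₙ be extremally disconnected compact Hausdorff spaces, and let fᵢ : Vᵢ → U (for i = 1, …, n) be continuous maps whose images jointly cover U, i.e. ⋃ᵢ fᵢ '' Vᵢ = U. Then there exist closed subsets Wᵢ ⊆ Vᵢ such that: each Wᵢ with the subspace topology is an extremally disconnected (compact Hausdorff) space; for each i, the restriction of fᵢ to Wᵢ is an open map into U (the image under fᵢ of every relatively open subset of Wᵢ is open in U); and ⋃ᵢ fᵢ '' Wᵢ = U. -/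
/-- A clopen subset of an extremally disconnected space is extremally disconnected. -/
lemma IsClopen.extremallyDisconnected' {X : Type*} [TopologicalSpace X]
    [ExtremallyDisconnected X] {s : Set X} (hs : IsClopen s) :
    ExtremallyDisconnected s where
  open_closure U hU := by
    rw [← (closure U).preimage_image_eq Subtype.coe_injective,
      ← hs.1.isClosedEmbedding_subtypeVal.closure_image_eq U]
    exact isOpen_induced (ExtremallyDisconnected.open_closure _
      (hs.2.isOpenEmbedding_subtypeVal.isOpenMap U hU))

/-- Given finitely many continuous maps from extremally disconnected compact
Hausdorff spaces whose images jointly cover an extremally disconnected compact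
Hausdorff space `U`, there are closed subsets `Wᵢ ⊆ Vᵢ`, themselves extremally
disconnected, on which the maps restrict to open maps and whose images still
jointly cover `U`. -/
theorem exists_closed_extremallyDisconnected_open_refinement
    {ι : Type*} [Finite ι]
    {U : Type*} [TopologicalSpace U] [CompactSpace U] [T2Space U]
    [ExtremallyDisconnected U]
    {V : ι → Type*} [∀ i, TopologicalSpace (V i)] [∀ i, CompactSpace (V i)]
    [∀ i, T2Space (V i)] [∀ i, ExtremallyDisconnected (V i)]
    (f : ∀ i, V i → U) (hf : ∀ i, Continuous (f i))
    (hcover : (⋃ i, Set.range (f i)) = Set.univ) :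
    ∃ W : ∀ i, Set (V i),
      (∀ i, IsClosed (W i)) ∧
      (∀ i, ExtremallyDisconnected (W i)) ∧
      (∀ i, IsOpenMap ((W i).restrict (f i))) ∧
      (⋃ i, f i '' W i) = Set.univ := by
  classical
  -- The total space and the joint map
  set SS := (i : ι) × V i
  let g : SS → U := fun p => f p.1 p.2
  have g_cont : Continuous g := continuous_sigma fun i => hf i
  have g_surj : Function.Surjective g := by
    intro u
    have : u ∈ ⋃ i, Set.range (f i) := hcover ▸ Set.mem_univ u
    obtain ⟨i, v, hv⟩ := Set.mem_iUnion.mp this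
    exact ⟨⟨i, v⟩, hv⟩
  -- Use projectivity of `U` (via `ULift` to align universes) to get a section of `g`.
  obtain ⟨s, s_cont, hs⟩ : ∃ s : U → SS, Continuous s ∧ ∀ u, g (s u) = u := by
    haveI : ExtremallyDisconnected (ULift.{max u_1 u_3} U) :=
      extremallyDisconnected_of_homeo Homeomorph.ulift.symm
    obtain ⟨h, h_cont, hh⟩ := CompactT2.ExtremallyDisconnected.projective
      (A := ULift.{max u_1 u_3} U) (Y := ULift.{u_2} SS) (Z := ULift.{max u_1 u_3} U)
      (f := id) (g := fun x => ULift.up (g x.down))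
      continuous_id (continuous_uliftUp.comp (g_cont.comp continuous_uliftDown)) (by
        rintro ⟨u⟩
        obtain ⟨x, hx⟩ := g_surj u
        exact ⟨⟨x⟩, by simp [hx]⟩)
    refine ⟨fun u => (h ⟨u⟩).down, continuous_uliftDown.comp (h_cont.comp continuous_uliftUp), fun u => ?_⟩
    have := congrFun hh ⟨u⟩
    simpa [ULift.ext_iff] using this
  have hsg : ∀ x ∈ Set.range s, s (g x) = x := by
    rintro x ⟨u, rfl⟩
    rw [hs u]
  have hrange_closed : IsClosed (Set.range s) := (isCompact_range s_cont).isClosed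
  -- Define the sets `W i`.
  refine ⟨fun i => {v : V i | (⟨i, v⟩ : SS) ∈ Set.range s}, ?_, ?_, ?_, ?_⟩
  · intro i
    exact hrange_closed.preimage continuous_sigmaMk
  · -- extremal disconnectedness
    intro i
    -- `W i` is homeomorphic to the clopen set `A = s ⁻¹' (range (Sigma.mk i))` in `U`.
    set W : Set (V i) := {v : V i | (⟨i, v⟩ : SS) ∈ Set.range s} with hW
    set A : Set U := s ⁻¹' (Set.range (Sigma.mk i : V i → SS)) with hA
    have hAclopen : IsClopen A :=
      (IsClopen.preimage ⟨(Topology.IsClosedEmbedding.sigmaMk (i := i)).isClosed_range,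
        (Topology.IsOpenEmbedding.sigmaMk (i := i)).isOpen_range⟩ s_cont)
    have key : ∀ v : W, s (f i v.1) = ⟨i, v.1⟩ := by
      rintro ⟨v, hv⟩
      exact hsg _ hv
    have hmapsto : ∀ v : W, f i v.1 ∈ A := by
      intro v
      rw [hA, Set.mem_preimage, key v]
      exact ⟨v.1, rfl⟩
    let φ : W → A := fun v => ⟨f i v.1, hmapsto v⟩
    have φ_cont : Continuous φ := Continuous.subtype_mk ((hf i).comp continuous_subtype_val) _
    have φ_bij : Function.Bijective φ := by
      constructor
      · rintro v v' h
        have h' : f i v.1 = f i v'.1 := congrArg Subtype.val h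
        have : (⟨i, v.1⟩ : SS) = ⟨i, v'.1⟩ := by
          rw [← key v, ← key v', h']
        exact Subtype.ext (sigma_mk_injective this)
      · rintro ⟨u, hu⟩
        obtain ⟨v, hv⟩ := hu
        have hvW : v ∈ W := ⟨u, hv.symm⟩
        refine ⟨⟨v, hvW⟩, Subtype.ext ?_⟩
        show f i v = u
        have : g (s u) = u := hs u
        rw [← hv] at this
        exact this
    haveI : CompactSpace W :=
      isCompact_iff_compactSpace.mp (hrange_closed.preimage continuous_sigmaMk).isCompact
    haveI : ExtremallyDisconnected A := hAclopen.extremallyDisconnected'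
    exact extremallyDisconnected_of_homeo
      (φ_cont.homeoOfEquivCompactToT2 (f := Equiv.ofBijective φ φ_bij)).symm
  · -- open maps
    intro i O hO
    obtain ⟨O', hO', rfl⟩ := isOpen_induced_iff.mp hO
    have himg : {v : V i | (⟨i, v⟩ : SS) ∈ Set.range s}.restrict (f i) ''
        (Subtype.val ⁻¹' O') = s ⁻¹' (Sigma.mk i '' O') := by
      ext u
      constructor
      · rintro ⟨⟨v, hvW⟩, hvO, rfl⟩
        have : s (f i v) = ⟨i, v⟩ := hsg _ hvW
        rw [Set.mem_preimage]
        change s (f i v) ∈ _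
        rw [this]
        exact ⟨v, hvO, rfl⟩
      · rintro hu
        obtain ⟨v, hvO', heq⟩ := hu
        have hvW : (⟨i, v⟩ : SS) ∈ Set.range s := heq ▸ Set.mem_range_self u
        have hfv : f i v = u := by
          have : g (⟨i, v⟩ : SS) = g (s u) := by rw [heq]
          rwa [hs u] at this
        exact ⟨⟨v, hvW⟩, hvO', hfv⟩
    rw [himg]
    exact (isOpenMap_sigmaMk O' hO').preimage s_cont
  · -- covering
    rw [Set.eq_univ_iff_forall]
    intro u
    refine Set.mem_iUnion.mpr ⟨(s u).1, (s u).2, ⟨u, (Sigma.eta _).symm⟩, ?_⟩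
    exact hs u
end

section
/- Let I be a type, F ⊆ I a finite subset, and π : (I → ℤ) →+ ℤ a homomorphism of additive groups from the full product group ∏_{i ∈ I} ℤ (with pointwise addition) to ℤ. Suppose that for all uniformly bounded functions f, g : I → ℤ (i.e. for each of f and g there exists n ∈ ℕ with |f i| ≤ n for all i, respectively |g i| ≤ n for all i) satisfying f i = g i for all i ∈ F, one has π f = π g. Then for all functions f, g : I → ℤ (not necessarily bounded) satisfying f i = g i for all i ∈ F, one has π f = π g; that is, π factors through the restriction map to ∏_{i ∈ F} ℤ. -/
/-- If a homomorphism `π : (∏_I ℤ) →+ ℤ` factors through the coordinates in a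
finite set `F` on all uniformly bounded functions, then it factors through the
coordinates in `F` on all functions. -/
theorem addHom_factors_through_finset_of_factors_on_bounded
    {I : Type*} (F : Set I) (hF : F.Finite) (π : (I → ℤ) →+ ℤ)
    (hbdd : ∀ f g : I → ℤ, (∃ n : ℕ, ∀ i, |f i| ≤ (n : ℤ)) →
      (∃ n : ℕ, ∀ i, |g i| ≤ (n : ℤ)) → (∀ i ∈ F, f i = g i) → π f = π g) :
    ∀ f g : I → ℤ, (∀ i ∈ F, f i = g i) → π f = π g := by
  have key : ∀ h : I → ℤ, (∀ i ∈ F, h i = 0) → π h = 0 := by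
    intro h hh
    have hdvd : ∀ k : ℕ, (2 : ℤ) ^ k ∣ π h := by
      intro k
      have hpos : (0 : ℤ) < 2 ^ k := by positivity
      set r : I → ℤ := fun i => h i % 2 ^ k with hr
      set q : I → ℤ := fun i => h i / 2 ^ k with hq
      have hdec : h = r + (2 : ℤ) ^ k • q := by
        funext i
        simp only [Pi.add_apply, Pi.smul_apply, smul_eq_mul, hr, hq]
        exact (Int.emod_add_mul_ediv (h i) (2 ^ k)).symm
      have hr0 : π r = 0 := by
        have := hbdd r 0 ⟨2 ^ k, ?_⟩ ⟨0, by simp⟩ ?_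
        · simpa using this
        · intro i
          have h1 : 0 ≤ h i % 2 ^ k := Int.emod_nonneg _ hpos.ne'
          have h2 : h i % 2 ^ k < 2 ^ k := Int.emod_lt_of_pos _ hpos
          rw [hr]
          push_cast
          rw [abs_of_nonneg h1]
          exact h2.le
        · intro i hi; simp [hr, hh i hi]
      rw [hdec, map_add, hr0, zero_add, map_zsmul, smul_eq_mul]
      exact Dvd.intro _ rfl
    by_contra hne
    have hk : |π h| < 2 ^ (π h).natAbs := by
      calc |π h| = ((π h).natAbs : ℤ) := (Int.abs_eq_natAbs _)
        _ < 2 ^ (π h).natAbs := by exact_mod_cast (Nat.lt_two_pow_self (n := (π h).natAbs))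
    exact hne (Int.eq_zero_of_abs_lt_dvd (hdvd (π h).natAbs) hk)
  intro f g hfg
  have := key (f - g) (fun i hi => by simp [hfg i hi])
  rw [map_sub, sub_eq_zero] at this
  exact this
end

section
/- Let X be a compact Hausdorff space, E an extremally disconnected compact Hausdorff space, and π : E → X a continuous surjection that is irreducible and quasi-open. Then for every extremally disconnected compact Hausdorff space S, the map g ↦ π ∘ g is a bijection from the set of quasi-open continuous maps S → E to the set of quasi-open continuous maps S → X. -/
open Function Set

/-- Irreducibility: preimage of the interior of the image of a closed set is inside the set. -/
lemma irr_preimage_interior_subset {X E : Type*} [TopologicalSpace X]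
    [TopologicalSpace E] (π : E → X) (hπ : Continuous π) (hπs : Function.Surjective π)
    (hπirr : ∀ C : Set E, IsClosed C → π '' C = Set.univ → C = Set.univ)
    {C : Set E} (hC : IsClosed C) : π ⁻¹' (interior (π '' C)) ⊆ C := by
  set W := interior (π '' C) with hW
  have hD : IsClosed (C ∪ π ⁻¹' Wᶜ) :=
    hC.union ((isOpen_interior.isClosed_compl).preimage hπ)
  have himg : π '' (C ∪ π ⁻¹' Wᶜ) = Set.univ := by
    apply Set.eq_univ_of_forall
    intro x
    by_cases hx : x ∈ W
    · rcases interior_subset hx with ⟨e, he, rfl⟩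
      exact ⟨e, Or.inl he, rfl⟩
    · rcases hπs x with ⟨e, rfl⟩
      exact ⟨e, Or.inr hx, rfl⟩
  have := hπirr _ hD himg
  intro e he
  have heD : e ∈ C ∪ π ⁻¹' Wᶜ := this ▸ Set.mem_univ e
  rcases heD with h | h
  · exact h
  · exact absurd he h

/-- Universe-polymorphic Gleason lifting lemma. -/
lemma exists_lift_of_ed {X : Type*} {E : Type*} {S : Type*}
    [TopologicalSpace X] [CompactSpace X] [T2Space X]
    [TopologicalSpace E] [CompactSpace E] [T2Space E]
    [TopologicalSpace S] [CompactSpace S] [T2Space S] [ExtremallyDisconnected S]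
    (π : E → X) (hπ : Continuous π) (hπs : Function.Surjective π)
    (h : S → X) (hh : Continuous h) : ∃ g : S → E, Continuous g ∧ π ∘ g = h := by
  classical
  let D : Set (S × E) := {p | h p.1 = π p.2}
  haveI D_comp : CompactSpace D := isCompact_iff_compactSpace.mp
    (isClosed_eq (hh.comp continuous_fst) (hπ.comp continuous_snd)).isCompact
  let A := ULift.{_, _} S
  have eA : A ≃ₜ S := Homeomorph.ulift
  haveI : CompactSpace A := eA.symm.compactSpace
  haveI : T2Space A := eA.symm.t2Space
  haveI : ExtremallyDisconnected A := extremallyDisconnected_of_homeo eA.symm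
  let ρ : D → A := fun d => ULift.up d.1.1
  have ρ_cont : Continuous ρ :=
    continuous_uliftUp.comp (continuous_fst.comp continuous_subtype_val)
  have ρ_surj : ρ.Surjective := by
    intro a
    rcases hπs (h a.down) with ⟨e, he⟩
    exact ⟨⟨⟨a.down, e⟩, he.symm⟩, rfl⟩
  rcases exists_compact_surjective_zorn_subset ρ_cont ρ_surj with ⟨E₀, _, E₀_onto, E₀_min⟩
  let σ : E₀ → A := E₀.restrict ρ
  have σ_cont : Continuous σ := ρ_cont.continuousOn.restrict
  have σ_surj : σ.Surjective := fun a => by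
    rcases (E₀_onto ▸ Set.mem_univ a : a ∈ ρ '' E₀) with ⟨d, hd, rfl⟩
    exact ⟨⟨d, hd⟩, rfl⟩
  let σ' := ExtremallyDisconnected.homeoCompactToT2 σ_cont σ_surj E₀_min
  let p₂ : D → E := fun d => d.1.2
  have p₂_cont : Continuous p₂ := continuous_snd.comp continuous_subtype_val
  refine ⟨E₀.restrict p₂ ∘ σ'.symm ∘ ULift.up, ?_, ?_⟩
  · exact (p₂_cont.continuousOn.restrict.comp σ'.symm.continuous).comp continuous_uliftUp
  · funext s
    have key : σ (σ'.symm (ULift.up s)) = ULift.up s := σ'.apply_symm_apply (ULift.up s)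
    have hmem : (σ'.symm (ULift.up s) : D).val ∈ D := (σ'.symm (ULift.up s) : D).2
    have h1 : (σ'.symm (ULift.up s) : D).val.1 = s := congrArg ULift.down key
    simp only [Function.comp_apply]
    have := hmem
    simp only [D, Set.mem_setOf_eq] at this
    rw [h1] at this
    exact this.symm

/-- If `π : E → X` is an irreducible quasi-open continuous surjection from an
extremally disconnected compact Hausdorff space to a compact Hausdorff space, then
for every extremally disconnected compact Hausdorff space `S`, postcomposition
with `π` is a bijection between quasi-open continuous maps `S → E` and quasi-open
continuous maps `S → X`. -/
theorem bijOn_comp_absolute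
    {X E : Type*} [TopologicalSpace X] [CompactSpace X] [T2Space X]
    [TopologicalSpace E] [CompactSpace E] [T2Space E] [ExtremallyDisconnected E]
    (π : E → X) (hπ : Continuous π) (hπs : Function.Surjective π)
    (hπirr : ∀ C : Set E, IsClosed C → π '' C = Set.univ → C = Set.univ)
    (hπqo : ∀ U : Set E, IsOpen U → U.Nonempty → (interior (π '' U)).Nonempty)
    (S : Type*) [TopologicalSpace S] [CompactSpace S] [T2Space S]
    [ExtremallyDisconnected S] :
    Set.BijOn (fun g : S → E => π ∘ g)
      {g : S → E | Continuous g ∧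
        ∀ U : Set S, IsOpen U → U.Nonempty → (interior (g '' U)).Nonempty}
      {h : S → X | Continuous h ∧
        ∀ U : Set S, IsOpen U → U.Nonempty → (interior (h '' U)).Nonempty} := by
  classical
  -- π ∘ g is quasi-open when g is
  have mapsTo : ∀ g : S → E, Continuous g →
      (∀ U : Set S, IsOpen U → U.Nonempty → (interior (g '' U)).Nonempty) →
      ∀ U : Set S, IsOpen U → U.Nonempty → (interior ((π ∘ g) '' U)).Nonempty := by
    intro g hg hgqo U hU hUne
    obtain ⟨A, hA⟩ := hgqo U hU hUne
    obtain ⟨x, hx⟩ := hπqo (interior (g '' U)) isOpen_interior ⟨A, hA⟩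
    have hsub : interior (π '' interior (g '' U)) ⊆ interior ((π ∘ g) '' U) := by
      apply interior_mono
      rw [Set.image_comp]
      exact Set.image_mono (f := π) interior_subset
    exact ⟨x, hsub hx⟩
  -- key: for g continuous with π ∘ g quasi-open, on any small closed piece,
  -- the preimage of the interior of the image lands in g '' (closure V).
  have key : ∀ g : S → E, Continuous g →
      (∀ U : Set S, IsOpen U → U.Nonempty → (interior ((π ∘ g) '' U)).Nonempty) →
      ∀ U : Set S, IsOpen U → U.Nonempty →
      ∃ B : Set X, B.Nonempty ∧ IsOpen B ∧ π ⁻¹' B ⊆ g '' U := by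
    intro g hg hqo U hU ⟨s, hs⟩
    obtain ⟨V, hVopen, hsV, hVcl⟩ :=
      normal_exists_closure_subset (isClosed_singleton (x := s))
        hU (Set.singleton_subset_iff.mpr hs)
    have hVne : V.Nonempty := ⟨s, hsV rfl⟩
    have hCclosed : IsClosed (g '' closure V) :=
      (isClosed_closure.isCompact.image hg).isClosed
    have hint : (interior (π '' (g '' closure V))).Nonempty := by
      obtain ⟨x, hx⟩ := hqo V hVopen hVne
      refine ⟨x, ?_⟩
      have : (π ∘ g) '' V ⊆ π '' (g '' closure V) := by
        rw [← Set.image_comp]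
        exact Set.image_mono subset_closure
      exact interior_mono this hx
    refine ⟨interior (π '' (g '' closure V)), hint, isOpen_interior, ?_⟩
    refine Set.Subset.trans
      (irr_preimage_interior_subset π hπ hπs hπirr hCclosed) ?_
    exact Set.image_mono (f := g) hVcl
  constructor
  · -- MapsTo
    rintro g ⟨hg, hgqo⟩
    exact ⟨hπ.comp hg, mapsTo g hg hgqo⟩
  constructor
  · -- InjOn
    rintro g₁ ⟨hg₁, hg₁qo⟩ g₂ ⟨hg₂, hg₂qo⟩ heq
    simp only at heq
    funext s
    by_contra hne
    obtain ⟨U₁, U₂, hU₁, hU₂, hx₁, hx₂, hdisj⟩ := t2_separation hne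
    have hdisjcl : Disjoint (closure U₁) (closure U₂) :=
      ExtremallyDisconnected.disjoint_closure_of_disjoint_isOpen hdisj hU₁ hU₂
    set W : Set S := g₁ ⁻¹' U₁ ∩ g₂ ⁻¹' U₂ with hW
    have hWopen : IsOpen W := (hU₁.preimage hg₁).inter (hU₂.preimage hg₂)
    have hWne : W.Nonempty := ⟨s, hx₁, hx₂⟩
    -- common composite
    have hqo1 := mapsTo g₁ hg₁ hg₁qo
    obtain ⟨B, hBne, hBopen, hB1⟩ := key g₁ hg₁ hqo1 W hWopen hWne
    obtain ⟨s₀, hs₀⟩ := hWne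
    obtain ⟨V, hVopen, hsV, hVcl⟩ :=
      normal_exists_closure_subset (isClosed_singleton (x := s₀))
        hWopen (Set.singleton_subset_iff.mpr hs₀)
    have hVne : V.Nonempty := ⟨s₀, hsV rfl⟩
    set K : Set X := (π ∘ g₁) '' closure V with hK
    have hBne : (interior K).Nonempty := by
      obtain ⟨x, hx⟩ := hqo1 V hVopen hVne
      exact ⟨x, interior_mono (Set.image_mono subset_closure) hx⟩
    have hC₁ : IsClosed (g₁ '' closure V) :=
      (isClosed_closure.isCompact.image hg₁).isClosed
    have hC₂ : IsClosed (g₂ '' closure V) :=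
      (isClosed_closure.isCompact.image hg₂).isClosed
    have hKeq₁ : π '' (g₁ '' closure V) = K := by rw [hK, Set.image_comp]
    have hKeq₂ : π '' (g₂ '' closure V) = K := by rw [hK, heq, Set.image_comp]
    have hsub₁ : π ⁻¹' (interior K) ⊆ g₁ '' closure V := by
      rw [← hKeq₁]
      exact irr_preimage_interior_subset π hπ hπs hπirr hC₁
    have hsub₂ : π ⁻¹' (interior K) ⊆ g₂ '' closure V := by
      rw [← hKeq₂]
      exact irr_preimage_interior_subset π hπ hπs hπirr hC₂
    obtain ⟨x, hx⟩ := hBne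
    obtain ⟨e, he⟩ := hπs x
    have heB : e ∈ π ⁻¹' (interior K) := by rw [Set.mem_preimage, he]; exact hx
    have he₁ : e ∈ closure U₁ := by
      obtain ⟨t, ht, rfl⟩ := hsub₁ heB
      exact subset_closure (hVcl ht).1
    have he₂ : e ∈ closure U₂ := by
      obtain ⟨t, ht, rfl⟩ := hsub₂ heB
      exact subset_closure (hVcl ht).2
    exact hdisjcl.ne_of_mem he₁ he₂ rfl
  · -- SurjOn
    rintro h ⟨hh, hhqo⟩
    obtain ⟨g, hg, hcomp⟩ := exists_lift_of_ed π hπ hπs h hh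
    refine ⟨g, ⟨hg, ?_⟩, hcomp⟩
    intro U hU hUne
    have hqo : ∀ V : Set S, IsOpen V → V.Nonempty →
        (interior ((π ∘ g) '' V)).Nonempty := by rw [hcomp]; exact hhqo
    obtain ⟨B, hBne, hBopen, hB⟩ := key g hg hqo U hU hUne
    obtain ⟨x, hx⟩ := hBne
    obtain ⟨e, he⟩ := hπs x
    have heB : e ∈ π ⁻¹' B := by rw [Set.mem_preimage, he]; exact hx
    have : π ⁻¹' B ⊆ interior (g '' U) := by
      apply subset_interior_iff.mpr
      exact ⟨π ⁻¹' B, hBopen.preimage hπ, Set.Subset.rfl, hB⟩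
    exact ⟨e, this heB⟩
end
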